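/- Let Q ⊂ ℝ² be a compact set, let B ⊆ Q be a finite set of points, and let p* ∈ ℝ² be a global minimizer of the Weber function W_B(p) = ∑_{q ∈ B} ‖p − q‖. Let p ∈ C(B) = {p ∈ ℝ² : ‖∑_{q ∈ B} vers(p − q)‖ ≤ 1} with p ≠ p*, and set δ = ‖p − p*‖. Fix α_min ∈ (0, π/2) and let B_{α_min} be the set of points q ∈ B \ {p*, p} such that the unoriented angle α_q between p − p* and q − p* satisfies sin(α_q) ≥ sin(α_min). If card(B_{α_min}) · sin²(α_min) > 2, then δ ≤ 2 · diam(Q) / (card(B_{α_min}) · sin²(α_min) − 2). -/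

import Mathlib

open InnerProductGeometry Real

open RealInnerProductSpace

/-- `vers v = v / ‖v‖` for `v ≠ 0`, and `vers 0 = 0`
(note `‖(0 : _)‖⁻¹ = 0` in `ℝ`, so the single formula covers both cases). -/
noncomputable def vers (v : EuclideanSpace ℝ (Fin 2)) : EuclideanSpace ℝ (Fin 2) :=
  ‖v‖⁻¹ • v

lemma norm_vers_le (v : EuclideanSpace ℝ (Fin 2)) : ‖vers v‖ ≤ 1 := by
  rcases eq_or_ne v 0 with h | h
  · simp [vers, h]
  · have hv : ‖v‖ ≠ 0 := norm_ne_zero_iff.mpr h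
    rw [vers, norm_smul, norm_inv, norm_norm, inv_mul_cancel₀ hv]

lemma inner_vers_self (v : EuclideanSpace ℝ (Fin 2)) : ⟪vers v, v⟫ = ‖v‖ := by
  rcases eq_or_ne v 0 with h | h
  · simp [vers, h]
  · have hv : ‖v‖ ≠ 0 := norm_ne_zero_iff.mpr h
    rw [vers, real_inner_smul_left, real_inner_self_eq_norm_sq, sq]
    field_simp

lemma inner_vers_le (u v : EuclideanSpace ℝ (Fin 2)) : ⟪vers u, v⟫ ≤ ‖v‖ := by
  calc ⟪vers u, v⟫ ≤ ‖vers u‖ * ‖v‖ := real_inner_le_norm _ _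
    _ ≤ 1 * ‖v‖ := mul_le_mul_of_nonneg_right (norm_vers_le u) (norm_nonneg v)
    _ = ‖v‖ := one_mul _

set_option maxHeartbeats 1000000 in
/-- Let `Q ⊂ ℝ²` be compact, `B ⊆ Q` finite, and `pstar` a global minimizer
of the Weber function of `B`. Let `p ∈ C(B) = {p : ‖∑ q ∈ B, vers (p - q)‖ ≤ 1}`, `p ≠ pstar`,
`δ = ‖p - pstar‖`. Fix `αmin ∈ (0, π/2)` and let `B'` consist of the points `q ∈ B \ {pstar, p}`
whose unoriented angle `α_q` between `p - pstar` and `q - pstar` satisfies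
`sin α_q ≥ sin αmin`. If `card B' · sin² αmin > 2`, then
`δ ≤ 2 diam Q / (card B' · sin² αmin - 2)`. -/
theorem solution_set_diameter_bound (Q : Set (EuclideanSpace ℝ (Fin 2))) (hQ : IsCompact Q)
    (B : Finset (EuclideanSpace ℝ (Fin 2))) (hBQ : (B : Set (EuclideanSpace ℝ (Fin 2))) ⊆ Q)
    (pstar : EuclideanSpace ℝ (Fin 2))
    (hmin : ∀ y : EuclideanSpace ℝ (Fin 2), (∑ q ∈ B, ‖pstar - q‖) ≤ ∑ q ∈ B, ‖y - q‖)
    (p : EuclideanSpace ℝ (Fin 2)) (hpC : ‖∑ q ∈ B, vers (p - q)‖ ≤ 1) (hpp : p ≠ pstar)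
    (αmin : ℝ) (hαmin : αmin ∈ Set.Ioo 0 (π / 2))
    (B' : Finset (EuclideanSpace ℝ (Fin 2)))
    (hB' : ∀ q : EuclideanSpace ℝ (Fin 2), q ∈ B' ↔
      q ∈ B ∧ q ≠ pstar ∧ q ≠ p ∧
        Real.sin αmin ≤ Real.sin (angle (p - pstar) (q - pstar)))
    (hcard : 2 < (B'.card : ℝ) * Real.sin αmin ^ 2) :
    ‖p - pstar‖ ≤ 2 * Metric.diam Q / ((B'.card : ℝ) * Real.sin αmin ^ 2 - 2) := by
  classical
  obtain ⟨hα0, hα2⟩ := hαmin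
  set v : EuclideanSpace ℝ (Fin 2) := p - pstar with hv
  set δ : ℝ := ‖p - pstar‖ with hδdef
  have hδ : 0 < δ := by rw [hδdef]; exact norm_pos_iff.mpr (sub_ne_zero.mpr hpp)
  have hvδ : ‖v‖ = δ := rfl
  set D : ℝ := Metric.diam Q with hD
  have hD0 : 0 ≤ D := Metric.diam_nonneg
  set s : ℝ := Real.sin αmin with hs
  have hs0 : 0 < s := by
    rw [hs]
    exact Real.sin_pos_of_pos_of_lt_pi hα0 (lt_trans hα2 (by linarith [Real.pi_pos]))
  have hsub : B' ⊆ B := fun q hq => ((hB' q).1 hq).1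
  have hBne : B.Nonempty := by
    have hB'ne : B'.Nonempty := by
      by_contra h
      rw [Finset.not_nonempty_iff_eq_empty] at h
      rw [h] at hcard
      simp at hcard
      linarith
    obtain ⟨q, hq⟩ := hB'ne
    exact ⟨q, hsub hq⟩
  -- pstar lies in the convex hull of B
  have hKmem : pstar ∈ convexHull ℝ (B : Set (EuclideanSpace ℝ (Fin 2))) := by
    by_contra hps
    have hKne : (convexHull ℝ (B : Set (EuclideanSpace ℝ (Fin 2)))).Nonempty :=
      (Finset.coe_nonempty.mpr hBne).mono (subset_convexHull ℝ _)
    have hKcomp : IsCompact (convexHull ℝ (B : Set (EuclideanSpace ℝ (Fin 2)))) :=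
      B.finite_toSet.isCompact_convexHull ℝ
    obtain ⟨r, hrK, hr⟩ := exists_norm_eq_iInf_of_complete_convex hKne
      hKcomp.isClosed.isComplete (convex_convexHull ℝ _) pstar
    have hproj := (norm_eq_iInf_iff_real_inner_le_zero (convex_convexHull ℝ _) hrK).1 hr
    have hpr : pstar ≠ r := fun h => hps (h ▸ hrK)
    have hlt : ∀ q ∈ B, ‖r - q‖ < ‖pstar - q‖ := by
      intro q hq
      have h1 : ⟪pstar - r, q - r⟫ ≤ 0 := hproj q (subset_convexHull ℝ _ hq)
      have h2 : 0 < ‖pstar - r‖ := norm_pos_iff.mpr (sub_ne_zero.mpr hpr)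
      have h3 : ‖pstar - q‖ ^ 2 = ‖pstar - r‖ ^ 2 + ‖r - q‖ ^ 2 + 2 * ⟪pstar - r, r - q⟫ := by
        have hx : pstar - q = (pstar - r) + (r - q) := by abel
        rw [hx, ← real_inner_self_eq_norm_sq, ← real_inner_self_eq_norm_sq,
          ← real_inner_self_eq_norm_sq, real_inner_add_add_self]
        ring
      have h4 : ⟪pstar - r, r - q⟫ = -⟪pstar - r, q - r⟫ := by
        rw [← inner_neg_right]
        congr 1
        abel
      nlinarith [norm_nonneg (r - q), norm_nonneg (pstar - q)]
    have hstrict : ∑ q ∈ B, ‖r - q‖ < ∑ q ∈ B, ‖pstar - q‖ :=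
      Finset.sum_lt_sum_of_nonempty hBne hlt
    linarith [hmin r]
  -- distances from pstar to points of B are at most diam Q
  have hdD : ∀ q ∈ B, ‖pstar - q‖ ≤ D := by
    intro q hq
    have hqQ : q ∈ convexHull ℝ Q := subset_convexHull ℝ Q (hBQ hq)
    have hpsQ : pstar ∈ convexHull ℝ Q := convexHull_mono hBQ hKmem
    have hB1 := Metric.dist_le_diam_of_mem (isBounded_convexHull.2 hQ.isBounded) hpsQ hqQ
    rwa [convexHull_diam, dist_eq_norm] at hB1
  -- Step F : subgradient inequality at p
  have hF : (∑ q ∈ B, ‖p - q‖) ≤ (∑ q ∈ B, ‖pstar - q‖) + δ := by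
    have hterm : ∀ q ∈ B, ‖p - q‖ ≤ ‖pstar - q‖ + ⟪vers (p - q), v⟫ := by
      intro q _
      have h2 : p - q = (pstar - q) + v := by rw [hv]; abel
      have h3 : ⟪vers (p - q), pstar - q⟫ ≤ ‖pstar - q‖ := inner_vers_le _ _
      calc ‖p - q‖ = ⟪vers (p - q), p - q⟫ := (inner_vers_self _).symm
        _ = ⟪vers (p - q), (pstar - q) + v⟫ := by rw [← h2]
        _ = ⟪vers (p - q), pstar - q⟫ + ⟪vers (p - q), v⟫ := inner_add_right _ _ _
        _ ≤ ‖pstar - q‖ + ⟪vers (p - q), v⟫ := by linarith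
    have hsum1 : ∑ q ∈ B, ⟪vers (p - q), v⟫ ≤ δ := by
      rw [← sum_inner]
      calc ⟪∑ q ∈ B, vers (p - q), v⟫ ≤ ‖∑ q ∈ B, vers (p - q)‖ * ‖v‖ :=
            real_inner_le_norm _ _
        _ ≤ 1 * δ := by
            rw [hvδ]
            exact mul_le_mul_of_nonneg_right hpC (le_of_lt hδ)
        _ = δ := one_mul _
    calc ∑ q ∈ B, ‖p - q‖ ≤ ∑ q ∈ B, (‖pstar - q‖ + ⟪vers (p - q), v⟫) :=
          Finset.sum_le_sum hterm
      _ = (∑ q ∈ B, ‖pstar - q‖) + ∑ q ∈ B, ⟪vers (p - q), v⟫ := Finset.sum_add_distrib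
      _ ≤ (∑ q ∈ B, ‖pstar - q‖) + δ := by linarith
  -- Step G : directional derivative at pstar
  set B₀ : Finset (EuclideanSpace ℝ (Fin 2)) := B.erase pstar with hB₀
  set L : ℝ := ∑ q ∈ B₀, ⟪vers (pstar - q), v⟫ with hLdef
  set M : ℝ := if pstar ∈ B then δ else 0 with hM
  have hM0 : 0 ≤ M := by rw [hM]; split <;> [exact le_of_lt hδ; rfl]
  have hψ : HasDerivAt (fun t : ℝ => ∑ q ∈ B₀, ‖(pstar - q) + t • v‖) L 0 := by
    rw [hLdef]
    apply HasDerivAt.fun_sum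
    intro q hq
    have hX : pstar - q ≠ 0 := sub_ne_zero.mpr (Finset.ne_of_mem_erase hq).symm
    have hXn : ‖pstar - q‖ ≠ 0 := norm_ne_zero_iff.mpr hX
    have hfun : (fun t : ℝ => ‖(pstar - q) + t • v‖) =
        fun t => Real.sqrt (‖v‖^2 * t^2 + 2 * ⟪pstar - q, v⟫ * t + ‖pstar - q‖^2) := by
      funext t
      rw [norm_eq_sqrt_real_inner]
      congr 1
      rw [real_inner_add_add_self, real_inner_smul_right, real_inner_smul_left,
        real_inner_smul_right, real_inner_self_eq_norm_sq, real_inner_self_eq_norm_sq]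
      ring
    have hP : HasDerivAt
        (fun t : ℝ => ‖v‖^2 * t^2 + 2 * ⟪pstar - q, v⟫ * t + ‖pstar - q‖^2)
        (2 * ⟪pstar - q, v⟫) 0 := by
      have h1 : HasDerivAt
          (fun t : ℝ => ‖v‖^2 * t^2 + 2 * ⟪pstar - q, v⟫ * t + ‖pstar - q‖^2)
          (‖v‖^2 * (2 * 0^1) + 2 * ⟪pstar - q, v⟫ * 1) 0 := by
        apply HasDerivAt.add_const
        exact ((hasDerivAt_pow 2 (0:ℝ)).const_mul (‖v‖^2)).add
          ((hasDerivAt_id (0:ℝ)).const_mul (2 * ⟪pstar - q, v⟫))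
      simpa using h1
    have hne : ‖v‖^2 * (0:ℝ)^2 + 2 * ⟪pstar - q, v⟫ * 0 + ‖pstar - q‖^2 ≠ 0 := by
      simpa using pow_ne_zero 2 hXn
    have h2 := hP.sqrt hne
    rw [hfun]
    refine h2.congr_deriv ?_
    have hsq : Real.sqrt (‖v‖^2 * (0:ℝ)^2 + 2 * ⟪pstar - q, v⟫ * 0 + ‖pstar - q‖^2)
        = ‖pstar - q‖ := by
      simp [Real.sqrt_sq (norm_nonneg (pstar - q))]
    rw [hsq, vers, real_inner_smul_left]
    field_simp
  have hGL : -M ≤ L := by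
    have hbound : ∀ t ∈ Set.Ioi (0:ℝ),
        -M ≤ slope (fun t : ℝ => ∑ q ∈ B₀, ‖(pstar - q) + t • v‖) 0 t := by
      intro t ht
      have ht0 : 0 < t := ht
      have hre : ∀ w : EuclideanSpace ℝ (Fin 2), ∀ u : ℝ,
          ‖pstar + u • v - w‖ = ‖(pstar - w) + u • v‖ := by
        intro w u; congr 1; abel
      have hW : ∑ q ∈ B, ‖pstar + t • v - q‖
          = (if pstar ∈ B then t * δ else 0) + ∑ q ∈ B₀, ‖(pstar - q) + t • v‖ := by
        by_cases hps : pstar ∈ B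
        · rw [if_pos hps, ← Finset.add_sum_erase _ _ hps, ← hB₀]
          congr 1
          · rw [hre, sub_self, zero_add, norm_smul, Real.norm_eq_abs, abs_of_pos ht0, hvδ]
          · exact Finset.sum_congr rfl fun q _ => hre q t
        · rw [if_neg hps, zero_add, hB₀, Finset.erase_eq_of_notMem hps]
          exact Finset.sum_congr rfl fun q _ => hre q t
      have hW0 : ∑ q ∈ B, ‖pstar - q‖ = ∑ q ∈ B₀, ‖(pstar - q) + (0:ℝ) • v‖ := by
        have : ∀ q : EuclideanSpace ℝ (Fin 2), ‖(pstar - q) + (0:ℝ) • v‖ = ‖pstar - q‖ := by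
          intro q; rw [zero_smul, add_zero]
        rw [Finset.sum_congr rfl fun q _ => this q]
        by_cases hps : pstar ∈ B
        · rw [← Finset.add_sum_erase _ _ hps, ← hB₀, sub_self, norm_zero, zero_add]
        · rw [hB₀, Finset.erase_eq_of_notMem hps]
      have hkey : ∑ q ∈ B₀, ‖(pstar - q) + (0:ℝ) • v‖
          ≤ (if pstar ∈ B then t * δ else 0) + ∑ q ∈ B₀, ‖(pstar - q) + t • v‖ := by
        rw [← hW0, ← hW]; exact hmin _
      rw [slope_def_field]
      rw [le_div_iff₀ (by linarith : (0:ℝ) < t - 0)]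
      rw [hM]
      split_ifs at hkey ⊢ with hps
      · nlinarith
      · nlinarith
    have htend := hasDerivAt_iff_tendsto_slope.1 hψ
    have htend' : Filter.Tendsto (slope (fun t : ℝ => ∑ q ∈ B₀, ‖(pstar - q) + t • v‖) 0)
        (nhdsWithin 0 (Set.Ioi 0)) (nhds L) :=
      htend.mono_left (nhdsWithin_mono 0 (fun x hx => by simpa using ne_of_gt hx))
    exact ge_of_tendsto htend' (Filter.eventually_of_mem self_mem_nhdsWithin hbound)
  -- total gap bound
  have hsum_gap : ∑ q ∈ B₀, (‖p - q‖ - ‖pstar - q‖ - ⟪vers (pstar - q), v⟫) ≤ δ := by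
    have h1 : ∑ q ∈ B₀, ‖p - q‖ = (∑ q ∈ B, ‖p - q‖) - M := by
      rw [hM]
      split_ifs with hps
      · rw [eq_sub_iff_add_eq, add_comm, hB₀, hδdef]
        exact Finset.add_sum_erase B (fun q => ‖p - q‖) hps
      · rw [hB₀, Finset.erase_eq_of_notMem hps, sub_zero]
    have h2 : ∑ q ∈ B₀, ‖pstar - q‖ = ∑ q ∈ B, ‖pstar - q‖ := by
      by_cases hps : pstar ∈ B
      · rw [hB₀]
        conv_rhs => rw [← Finset.add_sum_erase _ _ hps]
        rw [sub_self, norm_zero, zero_add]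
      · rw [hB₀, Finset.erase_eq_of_notMem hps]
    rw [Finset.sum_sub_distrib, Finset.sum_sub_distrib, h1, h2, ← hLdef]
    linarith
  -- gap is nonnegative on B₀
  have hgap0 : ∀ q ∈ B₀, 0 ≤ ‖p - q‖ - ‖pstar - q‖ - ⟪vers (pstar - q), v⟫ := by
    intro q _
    have h2 : p - q = (pstar - q) + v := by rw [hv]; abel
    have h3 : ⟪vers (pstar - q), p - q⟫
        = ⟪vers (pstar - q), pstar - q⟫ + ⟪vers (pstar - q), v⟫ := by
      rw [h2, inner_add_right]
    have h4 : ⟪vers (pstar - q), p - q⟫ ≤ ‖p - q‖ := inner_vers_le _ _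
    have h5 := inner_vers_self (pstar - q)
    linarith
  have hsubB₀ : B' ⊆ B₀ := by
    intro q hq
    obtain ⟨hqB, hqps, _, _⟩ := (hB' q).1 hq
    exact Finset.mem_erase.2 ⟨hqps, hqB⟩
  -- per-term lower bound on B'
  have hgapB' : ∀ q ∈ B',
      δ^2 * s^2 / (2 * (D + δ)) ≤ ‖p - q‖ - ‖pstar - q‖ - ⟪vers (pstar - q), v⟫ := by
    intro q hq
    obtain ⟨hqB, hqps, hqp, hsin⟩ := (hB' q).1 hq
    have hX : pstar - q ≠ 0 := sub_ne_zero.mpr (Ne.symm hqps)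
    set d : ℝ := ‖pstar - q‖ with hddef
    set e : ℝ := ‖p - q‖ with hedef
    set c : ℝ := Real.cos (angle v (q - pstar)) with hcdef
    set σ : ℝ := Real.sin (angle v (q - pstar)) with hσdef
    have hd0 : (0:ℝ) < d := norm_pos_iff.mpr hX
    have hpq : p - q = (pstar - q) + v := by rw [hv]; abel
    have hw : ⟪vers (pstar - q), v⟫ = ⟪pstar - q, v⟫ / d := by
      rw [vers, real_inner_smul_left, div_eq_inv_mul]
    have he2 : e^2 = δ^2 + d^2 + 2 * ⟪pstar - q, v⟫ := by
      rw [hedef, hpq, ← real_inner_self_eq_norm_sq, real_inner_add_add_self,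
        real_inner_self_eq_norm_sq, real_inner_self_eq_norm_sq, hvδ, hddef]
      ring
    have hpyth : σ^2 + c^2 = 1 := Real.sin_sq_add_cos_sq _
    have hcos : c = ⟪v, q - pstar⟫ / (δ * d) := by
      rw [hcdef, cos_angle, hvδ, hddef, norm_sub_rev q pstar]
    have hinner_swap : ⟪pstar - q, v⟫ = -⟪v, q - pstar⟫ := by
      rw [← neg_sub q pstar, inner_neg_left]
      exact neg_inj.mpr (real_inner_comm v (q - pstar))
    have hWc : ⟪pstar - q, v⟫ = -(δ * d * c) := by
      rw [hinner_swap, hcos]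
      field_simp
    have he2' : e^2 = δ^2 + d^2 - 2*(δ*d*c) := by rw [he2, hWc]; ring
    have he0 : 0 ≤ e := norm_nonneg _
    have heled : e ≤ d + δ := by
      rw [hedef, hpq, hddef, ← hvδ]
      exact norm_add_le _ _
    have hdD' : d ≤ D := hdD q hqB
    have hσpos : 0 < σ := lt_of_lt_of_le hs0 hsin
    have hσδ : 0 < δ^2*σ^2 := by positivity
    have hpyth2 : δ^2*σ^2 + δ^2*c^2 = δ^2 := by linear_combination δ^2 * hpyth
    have hgap : e - d - ⟪vers (pstar - q), v⟫ = e - d + δ*c := by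
      rw [hw, hWc]
      field_simp
      ring
    have hT0 : 0 < e + d - δ*c := by
      by_contra hcon
      push_neg at hcon
      have hA1 : (0:ℝ) ≤ -(e + (d - δ*c)) := by linarith
      have hA2 : (0:ℝ) ≤ e - (d - δ*c) := by linarith
      have h1 : e^2 ≤ (d - δ*c)^2 := by nlinarith [mul_nonneg hA1 hA2]
      have hexp : (d - δ*c)^2 = d^2 - 2*(δ*d*c) + δ^2*c^2 := by ring
      linarith [h1, hexp, he2', hpyth2, hσδ]
    have hid : (e - d + δ*c) * (e + d - δ*c) = δ^2*σ^2 := by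
      linear_combination he2' - hpyth2
    have hφ : e - d + δ*c = δ^2*σ^2 / (e + d - δ*c) :=
      (eq_div_iff (ne_of_gt hT0)).mpr hid
    have hcge : -(1:ℝ) ≤ c := by rw [hcdef]; exact Real.neg_one_le_cos _
    have hTle : e + d - δ*c ≤ 2*(D + δ) := by
      have h5 : δ * (-1) ≤ δ * c := mul_le_mul_of_nonneg_left hcge (le_of_lt hδ)
      linarith
    have hac : δ^2*s^2 ≤ δ^2*σ^2 :=
      mul_le_mul_of_nonneg_left (pow_le_pow_left₀ (le_of_lt hs0) hsin 2) (sq_nonneg δ)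
    show δ^2 * s^2 / (2 * (D + δ)) ≤ e - d - ⟪vers (pstar - q), v⟫
    rw [hgap, hφ]
    exact div_le_div₀ (le_of_lt hσδ) hac hT0 hTle
  -- assemble
  have hsumB' : (B'.card : ℝ) * (δ^2 * s^2 / (2 * (D + δ))) ≤ δ := by
    calc (B'.card : ℝ) * (δ^2 * s^2 / (2 * (D + δ)))
        = ∑ _q ∈ B', δ^2 * s^2 / (2 * (D + δ)) := by rw [Finset.sum_const, nsmul_eq_mul]
      _ ≤ ∑ q ∈ B', (‖p - q‖ - ‖pstar - q‖ - ⟪vers (pstar - q), v⟫) :=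
          Finset.sum_le_sum hgapB'
      _ ≤ ∑ q ∈ B₀, (‖p - q‖ - ‖pstar - q‖ - ⟪vers (pstar - q), v⟫) :=
          Finset.sum_le_sum_of_subset_of_nonneg hsubB₀ (fun q hq _ => hgap0 q hq)
      _ ≤ δ := hsum_gap
  have hDδ : 0 < 2 * (D + δ) := by linarith
  have h1 : (B'.card : ℝ) * (δ^2 * s^2) ≤ δ * (2 * (D + δ)) := by
    rw [← mul_div_assoc] at hsumB'
    exact (div_le_iff₀ hDδ).1 hsumB'
  have hden : 0 < (B'.card : ℝ) * s^2 - 2 := by linarith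
  rw [le_div_iff₀ hden]
  have h3 : (δ * ((B'.card : ℝ) * s^2 - 2)) * δ ≤ (2*D) * δ := by nlinarith [h1]
  exact le_of_mul_le_mul_right h3 hδ
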